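/- If a permutation class C is closed under inflation, i.e., C = C[C], then C is unsplittable. -/

import Mathlib

/-- A permutation of some finite length `n`, as a bijection of `Fin n`. -/
abbrev PPerm : Type := Σ n : ℕ, Equiv.Perm (Fin n)

/-- `Contains π σ` : the pattern `σ` occurs in (is contained in) `π`. -/
def Contains (π σ : PPerm) : Prop :=
  ∃ f : Fin σ.1 → Fin π.1, StrictMono f ∧
    ∀ i j, σ.2 i < σ.2 j ↔ π.2 (f i) < π.2 (f j)

/-- A permutation class: a set of permutations closed downwards under containment. -/
def IsPermClass (C : Set PPerm) : Prop :=
  ∀ π ∈ C, ∀ σ : PPerm, Contains π σ → σ ∈ C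

/-- `σ` is (exactly) the pattern of the set `S` of points of `π`. -/
def PatternOf (π : PPerm) (S : Set (Fin π.1)) (σ : PPerm) : Prop :=
  ∃ f : Fin σ.1 → Fin π.1, StrictMono f ∧ Set.range f = S ∧
    ∀ i j, σ.2 i < σ.2 j ↔ π.2 (f i) < π.2 (f j)

/-- The points of `π` lying in `S` contain an occurrence of `σ`. -/
def ContainsIn (π : PPerm) (S : Set (Fin π.1)) (σ : PPerm) : Prop :=
  ∃ f : Fin σ.1 → Fin π.1, StrictMono f ∧ (∀ i, f i ∈ S) ∧
    ∀ i j, σ.2 i < σ.2 j ↔ π.2 (f i) < π.2 (f j)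

/-- `π` is a merge of `σ` and `τ`: its points split into a part with pattern `σ`
and a part with pattern `τ`. -/
def IsMerge (π σ τ : PPerm) : Prop :=
  ∃ S : Set (Fin π.1), PatternOf π S σ ∧ PatternOf π Sᶜ τ

/-- Merge of two classes. -/
def MergeCl (C D : Set PPerm) : Set PPerm :=
  {π | ∃ σ ∈ C, ∃ τ ∈ D, IsMerge π σ τ}

/-- The empty permutation. -/
def pempty : PPerm := ⟨0, 1⟩

/-- The singleton permutation `1`. -/
def pone : PPerm := ⟨1, 1⟩

/-- Iterated merge of a list of classes. -/
def MergeAll : List (Set PPerm) → Set PPerm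
  | [] => {pempty}
  | [C] => C
  | C :: D :: Cs => MergeCl C (MergeAll (D :: Cs))

/-- A class is splittable if it is contained in the merge of finitely many
of its proper subclasses. -/
def Splittable (C : Set PPerm) : Prop :=
  ∃ Cs : List (Set PPerm), Cs ≠ [] ∧
    (∀ D ∈ Cs, IsPermClass D ∧ D ⊆ C ∧ D ≠ C) ∧ C ⊆ MergeAll Cs

/-- A class is atomic if it is not the union of two proper subclasses. -/
def Atomic (C : Set PPerm) : Prop :=
  ¬ ∃ D E : Set PPerm, IsPermClass D ∧ IsPermClass E ∧
      D ⊆ C ∧ D ≠ C ∧ E ⊆ C ∧ E ≠ C ∧ C = D ∪ E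

/-- Inflation `A[B]` of a class `A` by a class `B`: `π` decomposes into
consecutive nonempty blocks (given by the fibres of the monotone surjection `g`),
the relative order of distinct blocks follows `σ ∈ A`, and each block has its
pattern in `B`. -/
def Inflate (A B : Set PPerm) : Set PPerm :=
  {π | ∃ σ ∈ A, ∃ g : Fin π.1 → Fin σ.1, Monotone g ∧ Function.Surjective g ∧
    (∀ p q, g p ≠ g q → (π.2 p < π.2 q ↔ σ.2 (g p) < σ.2 (g q))) ∧
    ∀ b : Fin σ.1, ∃ τ ∈ B, PatternOf π {p | g p = b} τ}

/-- Direct sum `σ ⊕ τ`. -/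
def psum (σ τ : PPerm) : PPerm :=
  ⟨σ.1 + τ.1, finSumFinEquiv.permCongr (σ.2.sumCongr τ.2)⟩

/-- Skew sum `σ ⊖ τ`. -/
def pskew (σ τ : PPerm) : PPerm :=
  ⟨σ.1 + τ.1,
    finSumFinEquiv.symm.trans ((σ.2.sumCongr τ.2).trans
      ((Equiv.sumComm (Fin σ.1) (Fin τ.1)).trans
        (finSumFinEquiv.trans (finCongr (Nat.add_comm τ.1 σ.1)))))⟩

/-- Sum-decomposable: a direct sum of two nonempty permutations. -/
def SumDecomp (π : PPerm) : Prop :=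
  ∃ σ τ : PPerm, 0 < σ.1 ∧ 0 < τ.1 ∧ π = psum σ τ

/-- Skew-decomposable: a skew sum of two nonempty permutations. -/
def SkewDecomp (π : PPerm) : Prop :=
  ∃ σ τ : PPerm, 0 < σ.1 ∧ 0 < τ.1 ∧ π = pskew σ τ

def SumClosed (C : Set PPerm) : Prop := ∀ σ ∈ C, ∀ τ ∈ C, psum σ τ ∈ C

def SkewClosed (C : Set PPerm) : Prop := ∀ σ ∈ C, ∀ τ ∈ C, pskew σ τ ∈ C

/-- The class of permutations avoiding the pattern `σ`. -/
def Av (σ : PPerm) : Set PPerm := {π | ¬ Contains π σ}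

/-- The basis of a class: minimal permutations not belonging to it. -/
def PBasis (C : Set PPerm) : Set PPerm :=
  {π | π ∉ C ∧ ∀ σ : PPerm, Contains π σ → σ ≠ π → σ ∈ C}

/-- An interval of `π`: a set of points contiguous in positions and in values. -/
def IsInterval (π : PPerm) (S : Set (Fin π.1)) : Prop :=
  (∀ a ∈ S, ∀ b ∈ S, ∀ c, a ≤ c → c ≤ b → c ∈ S) ∧
  (∀ a ∈ S, ∀ b ∈ S, ∀ c, π.2 a ≤ π.2 c → π.2 c ≤ π.2 b → c ∈ S)

/-- A simple permutation: its only intervals are the subsingletons and the whole. -/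
def SimplePerm (π : PPerm) : Prop :=
  ∀ S : Set (Fin π.1), IsInterval π S → S.Subsingleton ∨ S = Set.univ

/-- Build a permutation from a function with an explicit inverse. -/
def mkP {n : ℕ} (f g : Fin n → Fin n)
    (h₁ : ∀ i, g (f i) = i) (h₂ : ∀ i, f (g i) = i) : PPerm :=
  ⟨n, ⟨f, g, h₁, h₂⟩⟩

def p12 : PPerm := ⟨2, 1⟩
def p21 : PPerm := mkP ![1,0] ![1,0] (by decide) (by decide)
def p213 : PPerm := mkP ![1,0,2] ![1,0,2] (by decide) (by decide)
def p231 : PPerm := mkP ![1,2,0] ![2,0,1] (by decide) (by decide)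
def p312 : PPerm := mkP ![2,0,1] ![1,2,0] (by decide) (by decide)
def p1234 : PPerm := ⟨4, 1⟩
def p2143 : PPerm := mkP ![1,0,3,2] ![1,0,3,2] (by decide) (by decide)
def p3412 : PPerm := mkP ![2,3,0,1] ![2,3,0,1] (by decide) (by decide)
def p4321 : PPerm := mkP ![3,2,1,0] ![3,2,1,0] (by decide) (by decide)
def p2413 : PPerm := mkP ![1,3,0,2] ![2,0,3,1] (by decide) (by decide)
def p3142 : PPerm := mkP ![2,0,3,1] ![1,3,0,2] (by decide) (by decide)

/-- The class `I` of increasing permutations. -/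
def IncCl : Set PPerm := Av p21
/-- The class `D` of decreasing permutations. -/
def DecCl : Set PPerm := Av p12
/-- The class `Av(213)`. -/
def Av213 : Set PPerm := Av p213
/-- The class `L = Av(231, 312)` of layered permutations. -/
def Layered : Set PPerm := Av p231 ∩ Av p312
/-- Separable permutations, characterised by avoidance of `2413` and `3142`. -/
def SepA : Set PPerm := Av p2413 ∩ Av p3142
/-- Separable permutations avoiding every element of `F`. -/
def Avs (F : Set PPerm) : Set PPerm := {π ∈ SepA | ∀ τ ∈ F, ¬ Contains π τ}
/-- The class of separable permutations, defined as the smallest permutation class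
containing `1` and closed under direct sums and skew sums. -/
def SepCl : Set PPerm :=
  ⋂₀ {C : Set PPerm | IsPermClass C ∧ pone ∈ C ∧
      ∀ σ ∈ C, ∀ τ ∈ C, psum σ τ ∈ C ∧ pskew σ τ ∈ C}

lemma pperm_eq_pempty (π : PPerm) (h : π.1 = 0) : π = pempty := by
  rcases π with ⟨n, e⟩
  subst h
  have : e = (1 : Equiv.Perm (Fin 0)) := Equiv.ext fun i => i.elim0
  rw [this]; rfl

lemma containsIn_pempty (π : PPerm) (S : Set (Fin π.1)) : ContainsIn π S pempty :=
  ⟨Fin.elim0, fun i => i.elim0, fun i => i.elim0, fun i => i.elim0⟩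

lemma containsIn_mono {π : PPerm} {S T : Set (Fin π.1)} (hST : S ⊆ T) {σ : PPerm}
    (h : ContainsIn π S σ) : ContainsIn π T σ := by
  obtain ⟨f, hf, hmem, hv⟩ := h
  exact ⟨f, hf, fun i => hST (hmem i), hv⟩

lemma contains_iff_univ (π σ : PPerm) : Contains π σ ↔ ContainsIn π Set.univ σ := by
  constructor
  · rintro ⟨f, hf, hv⟩; exact ⟨f, hf, fun i => trivial, hv⟩
  · rintro ⟨f, hf, _, hv⟩; exact ⟨f, hf, hv⟩

/-- Pull back an occurrence through a pattern-copy map. -/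
lemma containsIn_pull {π τ' : PPerm} {g : Fin τ'.1 → Fin π.1} (hg : StrictMono g)
    (hv : ∀ i j, τ'.2 i < τ'.2 j ↔ π.2 (g i) < π.2 (g j))
    {T : Set (Fin τ'.1)} {σ : PPerm}
    (h : ContainsIn π (g '' T) σ) : ContainsIn τ' T σ := by
  obtain ⟨f, hf, hmem, hfv⟩ := h
  choose e he1 he2 using hmem
  refine ⟨e, ?_, he1, ?_⟩
  · intro i j hij
    have : g (e i) < g (e j) := by rw [he2, he2]; exact hf hij
    exact (hg.lt_iff_lt).mp this
  · intro i j
    rw [hfv i j, ← he2, ← he2, ← hv]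

/-- Push forward an occurrence through a pattern-copy map. -/
lemma containsIn_push {π τ' : PPerm} {g : Fin τ'.1 → Fin π.1} (hg : StrictMono g)
    (hv : ∀ i j, τ'.2 i < τ'.2 j ↔ π.2 (g i) < π.2 (g j))
    {T : Set (Fin τ'.1)} {σ : PPerm}
    (h : ContainsIn τ' T σ) : ContainsIn π (g '' T) σ := by
  obtain ⟨f, hf, hmem, hfv⟩ := h
  exact ⟨g ∘ f, hg.comp hf, fun i => ⟨f i, hmem i, rfl⟩, fun i j => by
    simpa [Function.comp] using (hfv i j).trans (hv (f i) (f j))⟩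

lemma containsIn_of_pattern {π σ τ : PPerm} {S : Set (Fin π.1)}
    (hp : PatternOf π S σ) (h : ContainsIn π S τ) : Contains σ τ := by
  obtain ⟨g, hg, hrange, hv⟩ := hp
  rw [contains_iff_univ]
  apply containsIn_pull hg hv
  rwa [Set.image_univ, hrange]


lemma mergeAll_cons (D : Set PPerm) (rest : List (Set PPerm)) (h : rest ≠ []) :
    MergeAll (D :: rest) = MergeCl D (MergeAll rest) := by
  cases rest with
  | nil => exact absurd rfl h
  | cons E rest' => rfl

lemma coloring_lemma : ∀ (Cs : List (Set PPerm)), Cs ≠ [] →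
    (∀ D ∈ Cs, IsPermClass D) → ∀ π ∈ MergeAll Cs,
    ∃ c : Fin π.1 → ℕ, (∀ p, c p < Cs.length) ∧
      ∀ i (hi : i < Cs.length) τ, ContainsIn π {p | c p = i} τ → τ ∈ Cs[i] := by
  intro Cs
  induction Cs with
  | nil => intro h; exact absurd rfl h
  | cons D rest ih =>
    intro _ hcl π hπ
    by_cases hrest : rest = []
    · subst hrest
      refine ⟨fun _ => 0, fun p => by simp, ?_⟩
      intro i hi τ hτ
      have hi0 : i = 0 := by simp at hi; omega
      subst hi0
      simp only [List.getElem_cons_zero]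
      have : ContainsIn π Set.univ τ := containsIn_mono (Set.subset_univ _) hτ
      exact hcl D (List.mem_cons_self) π hπ τ ((contains_iff_univ π τ).mpr this)
    · rw [mergeAll_cons D rest hrest] at hπ
      obtain ⟨σ, hσD, τ', hτ', S, hS, hSc⟩ := hπ
      obtain ⟨g, hg, hrange, hv⟩ := hSc
      obtain ⟨c', hc'lt, hc'⟩ := ih hrest (fun E hE => hcl E (List.mem_cons_of_mem _ hE)) τ' hτ'
      have hpre : ∀ p : Fin π.1, p ∈ Sᶜ → ∃ q, g q = p := by
        intro p hp; rw [← hrange] at hp; exact hp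
      classical
      refine ⟨fun p => if hp : p ∈ Sᶜ then c' (hpre p hp).choose + 1 else 0, ?_, ?_⟩
      · intro p
        by_cases hp : p ∈ Sᶜ
        · have := hc'lt (hpre p hp).choose
          simp only [dif_pos hp, List.length_cons]; omega
        · simp only [dif_neg hp, List.length_cons]; omega
      · intro i hi τ hτ
        match i with
        | 0 =>
          simp only [List.getElem_cons_zero]
          have hsub : {p : Fin π.1 | (if hp : p ∈ Sᶜ then c' (hpre p hp).choose + 1 else 0) = 0} ⊆ S := by
            intro p hp
            simp only [Set.mem_setOf_eq] at hp
            by_contra hpS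
            rw [dif_pos (Set.mem_compl hpS)] at hp
            omega
          exact hcl D (List.mem_cons_self) σ hσD τ
            (containsIn_of_pattern hS (containsIn_mono hsub hτ))
        | (j+1) =>
          have hj : j < rest.length := by simpa using hi
          simp only [List.getElem_cons_succ]
          have hset : {p : Fin π.1 | (if hp : p ∈ Sᶜ then c' (hpre p hp).choose + 1 else 0) = j + 1}
              = g '' {q | c' q = j} := by
            ext p
            simp only [Set.mem_setOf_eq, Set.mem_image]
            constructor
            · intro hp
              by_cases hpS : p ∈ Sᶜ
              · rw [dif_pos hpS] at hp
                exact ⟨(hpre p hpS).choose, Nat.succ_injective hp, (hpre p hpS).choose_spec⟩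
              · rw [dif_neg hpS] at hp; exact absurd hp (by omega)
            · rintro ⟨q, hq, rfl⟩
              have hpS : g q ∈ Sᶜ := by rw [← hrange]; exact ⟨q, rfl⟩
              rw [dif_pos hpS]
              have : (hpre (g q) hpS).choose = q := hg.injective (hpre (g q) hpS).choose_spec
              rw [this, hq]
          rw [hset] at hτ
          exact hc' j hj τ (containsIn_pull hg hv hτ)
section Infl

lemma nat_npos {m n p : ℕ} (hp : p < m * n) : 0 < n := by
  rcases Nat.eq_zero_or_pos n with h | h
  · subst h; simp at hp
  · exact h

lemma nat_div_lt {m n p : ℕ} (hp : p < m * n) : p / n < m :=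
  (Nat.div_lt_iff_lt_mul (nat_npos hp)).mpr hp

lemma nat_val_lt {m n a b : ℕ} (ha : a < m) (hb : b < n) : a * n + b < m * n :=
  calc a * n + b < a * n + n := by omega
    _ = (a + 1) * n := by ring
    _ ≤ m * n := Nat.mul_le_mul_right n ha

lemma nat_div_eq {n a b : ℕ} (hb : b < n) : (a * n + b) / n = a := by
  rw [mul_comm, Nat.mul_add_div (by omega), Nat.div_eq_of_lt hb, add_zero]

lemma nat_mod_eq {n a b : ℕ} (hb : b < n) : (a * n + b) % n = b := by
  rw [mul_comm, Nat.mul_add_mod, Nat.mod_eq_of_lt hb]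

/-- The inflation `σ[τ,τ,…,τ]`. Position `p` lies in block `p / τ.1` at offset
`p % τ.1`; its value is `σ(block) * τ.1 + τ(offset)`. -/
def inflP (σ τ : PPerm) : PPerm :=
  ⟨σ.1 * τ.1,
   { toFun := fun p =>
       ⟨(σ.2 ⟨p.1 / τ.1, nat_div_lt p.2⟩).1 * τ.1 + (τ.2 ⟨p.1 % τ.1, Nat.mod_lt _ (nat_npos p.2)⟩).1,
        nat_val_lt (σ.2 _).2 (τ.2 _).2⟩,
     invFun := fun p =>
       ⟨(σ.2⁻¹ ⟨p.1 / τ.1, nat_div_lt p.2⟩).1 * τ.1 + (τ.2⁻¹ ⟨p.1 % τ.1, Nat.mod_lt _ (nat_npos p.2)⟩).1,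
        nat_val_lt (σ.2⁻¹ _).2 (τ.2⁻¹ _).2⟩,
     left_inv := by
       intro p
       apply Fin.ext
       simp only [nat_div_eq (τ.2 _).2, nat_mod_eq (τ.2 _).2, Fin.eta, Equiv.Perm.inv_def, Equiv.symm_apply_apply]
       rw [mul_comm]
       exact Nat.div_add_mod p.1 τ.1,
     right_inv := by
       intro p
       apply Fin.ext
       simp only [Equiv.Perm.inv_def, nat_div_eq (τ.2.symm _).2, nat_mod_eq (τ.2.symm _).2, Fin.eta, Equiv.apply_symm_apply]
       rw [mul_comm]
       exact Nat.div_add_mod p.1 τ.1 }⟩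

lemma inflP_fst (σ τ : PPerm) : (inflP σ τ).1 = σ.1 * τ.1 := rfl

/-- The block of a point of an inflation. -/
def blk (σ τ : PPerm) (p : Fin (inflP σ τ).1) : Fin σ.1 := ⟨p.1 / τ.1, nat_div_lt p.2⟩

lemma blk_apply (σ τ : PPerm) (p : Fin (inflP σ τ).1) :
    ((inflP σ τ).2 p).1 = (σ.2 (blk σ τ p)).1 * τ.1 + (τ.2 ⟨p.1 % τ.1, Nat.mod_lt _ (nat_npos p.2)⟩).1 := rfl

lemma blk_mono (σ τ : PPerm) : Monotone (blk σ τ) := by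
  intro p q hpq
  exact Nat.div_le_div_right hpq

lemma blk_surj (σ τ : PPerm) (hτ : 0 < τ.1) : Function.Surjective (blk σ τ) := by
  intro b
  refine ⟨⟨b.1 * τ.1, by simpa [inflP_fst] using nat_val_lt b.2 hτ⟩, ?_⟩
  apply Fin.ext
  simp only [blk]
  calc (b.1 * τ.1) / τ.1 = (b.1 * τ.1 + 0) / τ.1 := by rw [add_zero]
    _ = b.1 := nat_div_eq hτ

lemma blk_order (σ τ : PPerm) (p q : Fin (inflP σ τ).1) (h : blk σ τ p ≠ blk σ τ q) :
    ((inflP σ τ).2 p < (inflP σ τ).2 q ↔ σ.2 (blk σ τ p) < σ.2 (blk σ τ q)) := by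
  have hσ : σ.2 (blk σ τ p) ≠ σ.2 (blk σ τ q) := fun he => h (σ.2.injective he)
  rw [Fin.lt_def, Fin.lt_def, blk_apply, blk_apply]
  have hvp := (τ.2 ⟨p.1 % τ.1, Nat.mod_lt _ (nat_npos p.2)⟩).2
  have hvq := (τ.2 ⟨q.1 % τ.1, Nat.mod_lt _ (nat_npos q.2)⟩).2
  constructor
  · intro hlt
    rcases lt_or_gt_of_ne hσ with h1 | h1
    · exact h1
    · exfalso
      have : (σ.2 (blk σ τ q)).1 + 1 ≤ (σ.2 (blk σ τ p)).1 := h1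
      nlinarith [Nat.mul_le_mul_right τ.1 this]
  · intro hlt
    have : (σ.2 (blk σ τ p)).1 + 1 ≤ (σ.2 (blk σ τ q)).1 := hlt
    nlinarith [Nat.mul_le_mul_right τ.1 this]

/-- The embedding of block `b` into the inflation. -/
def blkEmb (σ τ : PPerm) (b : Fin σ.1) (i : Fin τ.1) : Fin (inflP σ τ).1 :=
  ⟨b.1 * τ.1 + i.1, nat_val_lt b.2 i.2⟩

lemma blkEmb_mono (σ τ : PPerm) (b : Fin σ.1) : StrictMono (blkEmb σ τ b) := by
  intro i j hij
  simp only [blkEmb, Fin.mk_lt_mk]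
  show b.1 * τ.1 + i.1 < b.1 * τ.1 + j.1
  omega

lemma blk_blkEmb (σ τ : PPerm) (b : Fin σ.1) (i : Fin τ.1) : blk σ τ (blkEmb σ τ b i) = b :=
  Fin.ext (nat_div_eq i.2)

lemma blkEmb_val (σ τ : PPerm) (b : Fin σ.1) (i : Fin τ.1) :
    ((inflP σ τ).2 (blkEmb σ τ b i)).1 = (σ.2 b).1 * τ.1 + (τ.2 i).1 := by
  have hmod : (⟨(blkEmb σ τ b i).1 % τ.1, Nat.mod_lt _ (nat_npos (blkEmb σ τ b i).2)⟩ : Fin τ.1) = i :=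
    Fin.ext (nat_mod_eq i.2)
  rw [blk_apply, blk_blkEmb, hmod]

lemma blkEmb_range (σ τ : PPerm) (b : Fin σ.1) :
    Set.range (blkEmb σ τ b) = {p | blk σ τ p = b} := by
  ext p
  constructor
  · rintro ⟨i, rfl⟩; exact blk_blkEmb σ τ b i
  · intro hp
    have hdm := Nat.div_add_mod p.1 τ.1
    have hb : p.1 / τ.1 = b.1 := congrArg Fin.val hp
    rw [hb] at hdm
    refine ⟨⟨p.1 % τ.1, Nat.mod_lt _ (nat_npos p.2)⟩, Fin.ext ?_⟩
    show b.1 * τ.1 + p.1 % τ.1 = p.1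
    rw [mul_comm]
    exact hdm

/-- Block `b` of the inflation has pattern exactly `τ`. -/
lemma blk_pattern (σ τ : PPerm) (b : Fin σ.1) :
    PatternOf (inflP σ τ) {p | blk σ τ p = b} τ := by
  refine ⟨blkEmb σ τ b, blkEmb_mono σ τ b, blkEmb_range σ τ b, ?_⟩
  intro i j
  simp only [Fin.lt_def, blkEmb_val]
  omega

/-- The inflation is in `Inflate C C` whenever its parts are in `C`. -/
lemma inflP_mem (C : Set PPerm) {σ τ : PPerm} (hσ : σ ∈ C) (hτ : τ ∈ C) (hτ1 : 0 < τ.1) :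
    inflP σ τ ∈ Inflate C C := by
  refine ⟨σ, hσ, blk σ τ, blk_mono σ τ, blk_surj σ τ hτ1, blk_order σ τ, ?_⟩
  intro b
  exact ⟨τ, hτ, blk_pattern σ τ b⟩

/-- Selecting one point in each block gives a copy of `σ`. -/
lemma blk_select (σ τ : PPerm) (S : Set (Fin (inflP σ τ).1)) (s : Fin σ.1 → Fin (inflP σ τ).1)
    (hs : ∀ b, blk σ τ (s b) = b) (hmem : ∀ b, s b ∈ S) :
    ContainsIn (inflP σ τ) S σ := by
  refine ⟨s, ?_, hmem, ?_⟩
  · intro b b' hbb'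
    have h1 : (s b).1 < (b.1 + 1) * τ.1 := by
      have hb : (s b).1 / τ.1 = b.1 := congrArg Fin.val (hs b)
      have hdm := Nat.div_add_mod (s b).1 τ.1
      have hr := Nat.mod_lt (s b).1 (nat_npos (s b).2)
      rw [hb] at hdm
      calc (s b).1 = τ.1 * b.1 + (s b).1 % τ.1 := hdm.symm
        _ < τ.1 * b.1 + τ.1 := by omega
        _ = (b.1 + 1) * τ.1 := by ring
    have h2 : b'.1 * τ.1 ≤ (s b').1 := by
      have hb : (s b').1 / τ.1 = b'.1 := congrArg Fin.val (hs b')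
      have hdm := Nat.div_add_mod (s b').1 τ.1
      rw [hb] at hdm
      calc b'.1 * τ.1 = τ.1 * b'.1 := by ring
        _ ≤ τ.1 * b'.1 + (s b').1 % τ.1 := Nat.le_add_right _ _
        _ = (s b').1 := hdm
    have : (b.1 + 1) * τ.1 ≤ b'.1 * τ.1 := Nat.mul_le_mul_right _ hbb'
    exact Fin.lt_def.mpr (by omega)
  · intro b b'
    have hne : blk σ τ (s b) ≠ blk σ τ (s b') ∨ b = b' := by
      by_cases hbb : b = b'
      · exact Or.inr hbb
      · exact Or.inl (by rw [hs, hs]; exact hbb)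
    rcases hne with hne | rfl
    · rw [blk_order σ τ _ _ hne, hs, hs]
    · simp

end Infl
/-- Iterated inflation of a list of permutations. -/
def bigRho : List PPerm → PPerm
  | [] => pone
  | π :: rest => inflP π (bigRho rest)

lemma bigRho_pos (L : List PPerm) (hL : ∀ π ∈ L, 0 < π.1) : 0 < (bigRho L).1 := by
  induction L with
  | nil => exact Nat.one_pos
  | cons π rest ih =>
    have h1 : 0 < π.1 := hL π (List.mem_cons_self)
    have h2 : 0 < (bigRho rest).1 := ih fun ρ hρ => hL ρ (List.mem_cons_of_mem _ hρ)
    exact Nat.mul_pos h1 h2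

lemma bigRho_mem (C : Set PPerm) (h : Inflate C C = C) (hone : pone ∈ C)
    (L : List PPerm) (hL : ∀ π ∈ L, π ∈ C) (hLpos : ∀ π ∈ L, 0 < π.1) : bigRho L ∈ C := by
  induction L with
  | nil => exact hone
  | cons π rest ih =>
    have h1 : π ∈ C := hL π (List.mem_cons_self)
    have h2 : bigRho rest ∈ C := ih (fun ρ hρ => hL ρ (List.mem_cons_of_mem _ hρ))
      (fun ρ hρ => hLpos ρ (List.mem_cons_of_mem _ hρ))
    have h3 : 0 < (bigRho rest).1 := bigRho_pos rest fun ρ hρ => hLpos ρ (List.mem_cons_of_mem _ hρ)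
    rw [← h]
    exact inflP_mem C h1 h2 h3

/-- The key lemma: for any colouring of the iterated inflation with colours
below the list length, some colour class contains the corresponding permutation. -/
lemma key_lemma : ∀ (L : List PPerm), (∀ π ∈ L, 0 < π.1) →
    ∀ c : Fin (bigRho L).1 → ℕ, (∀ p, c p < L.length) →
    ∃ i, ∃ hi : i < L.length, ContainsIn (bigRho L) {p | c p = i} L[i] := by
  intro L
  induction L with
  | nil =>
    intro _ c hc
    have p0 : Fin (bigRho []).1 := ⟨0, Nat.one_pos⟩
    exact absurd (hc p0) (by simp)
  | cons π rest ih =>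
    intro hpos c hc
    have hrpos : 0 < (bigRho rest).1 := bigRho_pos rest fun ρ hρ => hpos ρ (List.mem_cons_of_mem _ hρ)
    by_cases hall : ∀ b : Fin π.1, ∃ p, blk π (bigRho rest) p = b ∧ c p = 0
    · -- every block has a colour-0 point: colour 0 contains π
      choose s hs1 hs2 using hall
      refine ⟨0, by simp, ?_⟩
      simp only [List.getElem_cons_zero]
      exact blk_select π (bigRho rest) _ s hs1 hs2
    · -- some block avoids colour 0: recurse inside it
      push_neg at hall
      obtain ⟨b, hb⟩ := hall
      -- points in block b
      have hemb := blkEmb_mono π (bigRho rest) b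
      have hembv : ∀ i j, (bigRho rest).2 i < (bigRho rest).2 j ↔
          (inflP π (bigRho rest)).2 (blkEmb π (bigRho rest) b i) <
            (inflP π (bigRho rest)).2 (blkEmb π (bigRho rest) b j) := by
        intro i j
        simp only [Fin.lt_def, blkEmb_val]
        omega
      have hne0 : ∀ i : Fin (bigRho rest).1, c (blkEmb π (bigRho rest) b i) ≠ 0 := by
        intro i h0
        exact hb (blkEmb π (bigRho rest) b i) (blk_blkEmb π (bigRho rest) b i) h0
      set c' : Fin (bigRho rest).1 → ℕ := fun i => c (blkEmb π (bigRho rest) b i) - 1 with hc'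
      have hc'lt : ∀ i, c' i < rest.length := by
        intro i
        have := hc (blkEmb π (bigRho rest) b i)
        have := hne0 i
        simp only [hc', List.length_cons] at *
        omega
      obtain ⟨i, hi, hcont⟩ := ih (fun ρ hρ => hpos ρ (List.mem_cons_of_mem _ hρ)) c' hc'lt
      refine ⟨i + 1, by simpa using hi, ?_⟩
      simp only [List.getElem_cons_succ]
      have := containsIn_push hemb hembv hcont
      refine containsIn_mono ?_ this
      rintro p ⟨q, hq, rfl⟩
      simp only [Set.mem_setOf_eq, hc'] at hq ⊢
      have := hne0 q
      have hq' : c (blkEmb π (bigRho rest) b q) - 1 = i := hq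
      show c (blkEmb π (bigRho rest) b q) = i + 1
      omega
/-- If a permutation class is closed under inflation, `C = C[C]`, then it is
unsplittable. -/
theorem stmt4 (C : Set PPerm) (hC : IsPermClass C) (h : Inflate C C = C) :
    ¬ Splittable C := by
  rintro ⟨Cs, hne, hsub, hmerge⟩
  classical
  have hcl : ∀ D ∈ Cs, IsPermClass D := fun D hD => (hsub D hD).1
  -- C is nonempty: pick a permutation outside the first part
  obtain ⟨D0, hD0⟩ : ∃ D, D ∈ Cs := by
    cases Cs with
    | nil => exact absurd rfl hne
    | cons D rest => exact ⟨D, List.mem_cons_self⟩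
  obtain ⟨hclD0, hsubD0, hneD0⟩ := hsub D0 hD0
  obtain ⟨π0, hπ0C, hπ0D⟩ :=
    Set.exists_of_ssubset (ssubset_of_subset_of_ne hsubD0 hneD0)
  -- the empty permutation lies in every part
  have hpe : ∀ i (hi : i < Cs.length), pempty ∈ Cs[i] := by
    obtain ⟨c, hclt, hcc⟩ := coloring_lemma Cs hne hcl π0 (hmerge hπ0C)
    intro i hi
    exact hcc i hi pempty (containsIn_pempty _ _)
  have hpeD0 : pempty ∈ D0 := by
    obtain ⟨i, hi, hEq⟩ := List.mem_iff_getElem.mp hD0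
    exact hEq ▸ hpe i hi
  -- π0 is nonempty, hence `pone ∈ C`
  have hπ0pos : 0 < π0.1 := by
    rcases Nat.eq_zero_or_pos π0.1 with h0 | hpos
    · rw [pperm_eq_pempty π0 h0] at hπ0D
      exact absurd hpeD0 hπ0D
    · exact hpos
  have hone : pone ∈ C := by
    apply hC π0 hπ0C
    refine ⟨fun _ => ⟨0, hπ0pos⟩, ?_, ?_⟩
    · intro i j hij
      exfalso
      have e : pone.1 = 1 := rfl
      have h1 : i.1 < j.1 := hij
      have h2 : j.1 < pone.1 := j.2
      omega
    · intro i j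
      have hij : i = j := Fin.ext (by
        have e : pone.1 = 1 := rfl
        have := i.2
        have := j.2
        omega)
      rw [hij]
      simp
  -- in each part, choose a nonempty permutation of `C` avoided by that part
  have hwit : ∀ i (hi : i < Cs.length), ∃ π, π ∈ C ∧ π ∉ Cs[i] ∧ 0 < π.1 := by
    intro i hi
    obtain ⟨hcli, hsubi, hnei⟩ := hsub Cs[i] (List.getElem_mem hi)
    obtain ⟨π, hπC, hπD⟩ := Set.exists_of_ssubset (ssubset_of_subset_of_ne hsubi hnei)
    refine ⟨π, hπC, hπD, ?_⟩
    rcases Nat.eq_zero_or_pos π.1 with h0 | hpos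
    · rw [pperm_eq_pempty π h0] at hπD
      exact absurd (hpe i hi) hπD
    · exact hpos
  choose w hwC hwD hwpos using hwit
  set L : List PPerm := List.ofFn (fun i : Fin Cs.length => w i.1 i.2) with hLdef
  have hlen : L.length = Cs.length := List.length_ofFn
  have hLC : ∀ π ∈ L, π ∈ C := by
    intro π hπ
    rw [hLdef, List.mem_ofFn] at hπ
    obtain ⟨i, rfl⟩ := hπ
    exact hwC i.1 i.2
  have hLpos : ∀ π ∈ L, 0 < π.1 := by
    intro π hπ
    rw [hLdef, List.mem_ofFn] at hπ
    obtain ⟨i, rfl⟩ := hπ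
    exact hwpos i.1 i.2
  -- the iterated inflation lies in C, hence in the merge; colour it
  have hρC : bigRho L ∈ C := bigRho_mem C h hone L hLC hLpos
  obtain ⟨c, hclt, hcc⟩ := coloring_lemma Cs hne hcl (bigRho L) (hmerge hρC)
  obtain ⟨i, hi, hcont⟩ := key_lemma L hLpos c (fun p => by rw [hlen]; exact hclt p)
  have hiC : i < Cs.length := by rw [← hlen]; exact hi
  have hmem : L[i] ∈ Cs[i] := hcc i hiC L[i] hcont
  have hget : L[i] = w i hiC := by
    have := List.getElem_ofFn (f := fun j : Fin Cs.length => w j.1 j.2) (i := i)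
      (by rw [List.length_ofFn]; exact hiC)
    exact this
  rw [hget] at hmem
  exact hwD i hiC hmem
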